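/- In the nilpotent Lie algebra with structure equations dη^i = 0 (i=1,2,3), dη^4 = a_2 η^{13} + a_3 η^{1 1̄} + a_5 η^{1 3̄} + a_{10} η^{3 1̄} + a_{12} η^{3 3̄}, the (0,1)-vector form φ(r,s) = r η̄^1 ⊗ Z_1 + s η̄^3 ⊗ Z_3 (with Z_j dual to η^j) defines an integrable complex structure, i.e., the deformed coframe η^j_{r,s} = η^j + i_{φ}(η^j) satisfies (dη^j_{r,s})^{0,2} = 0 for all j, if and only if −r a_5 + s a_{10} + r s a_2 = 0. -/

import Mathlib

/-!
STATEMENT 8: With structure equations dη^i = 0 (i = 1,2,3),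
dη^4 = a₂η^{13} + a₃η^{11̄} + a₅η^{13̄} + a₁₀η^{31̄} + a₁₂η^{33̄},
the (0,1)-vector form φ(r,s) = r η̄^1 ⊗ Z₁ + s η̄^3 ⊗ Z₃ defines an integrable complex
structure — i.e. the deformed coframe η^1_{r,s} = η^1 + rη̄^1, η^2_{r,s} = η^2,
η^3_{r,s} = η^3 + sη̄^3, η^4_{r,s} = η^4 has (dη^j_{r,s})^{0,2} = 0 for all j, where
the (0,2)-part vanishing means dη^j_{r,s} lies in the span of the (2,0)- and
(1,1)-monomials of the new coframe — if and only if −ra₅ + sa₁₀ + rsa₂ = 0.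
-/

open ExteriorAlgebra

noncomputable section

abbrev Λ8 : Type := ExteriorAlgebra ℂ (Fin 8 → ℂ)

def gen (j : Fin 8) : Λ8 := ExteriorAlgebra.ι ℂ (Pi.single j 1)

def eta (j : Fin 4) : Λ8 := gen (Fin.castAdd 4 j)

def etb (j : Fin 4) : Λ8 := gen (Fin.natAdd 4 j)

/-- deformed (1,0)-coframe η^j_{r,s} = η^j + i_{φ(r,s)}η^j -/
def etaRS (r s : ℂ) : Fin 4 → Λ8 :=
  ![eta 0 + r • etb 0, eta 1, eta 2 + s • etb 2, eta 3]

/-- conjugate deformed coframe η̄^j_{r,s} -/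
def etbRS (r s : ℂ) : Fin 4 → Λ8 :=
  ![etb 0 + (starRingEnd ℂ r) • eta 0, etb 1, etb 2 + (starRingEnd ℂ s) • eta 2, etb 3]

def wedge2 {M : Type*} [AddCommGroup M] [Module ℂ M] (f g : M →ₗ[ℂ] ℂ) :
    M [⋀^Fin 2]→ₗ[ℂ] ℂ where
  toFun v := f (v 0) * g (v 1) - f (v 1) * g (v 0)
  map_update_add' := by
    intro _ v i x y
    fin_cases i <;> simp [Function.update, Fin.ext_iff] <;> ring
  map_update_smul' := by
    intro _ v i c x
    fin_cases i <;> simp [Function.update, Fin.ext_iff] <;> ring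
  map_eq_zero_of_eq' := by
    intro v i j hij hne
    fin_cases i <;> fin_cases j <;> simp_all
def ell {M : Type*} [AddCommGroup M] [Module ℂ M] (f g : M →ₗ[ℂ] ℂ) :
    ExteriorAlgebra ℂ M →ₗ[ℂ] ℂ :=
  liftAlternating (fun i => match i with
    | 2 => wedge2 f g
    | _ => 0)
lemma ell_ι_mul_ι {M : Type*} [AddCommGroup M] [Module ℂ M] (f g : M →ₗ[ℂ] ℂ)
    (a b : M) : ell f g (ι ℂ a * ι ℂ b) = f a * g b - f b * g a := by
  rw [ell, liftAlternating_ι_mul, liftAlternating_ι]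
  simp [wedge2]
def bF (r : ℂ) : (Fin 8 → ℂ) →ₗ[ℂ] ℂ := LinearMap.proj (4 : Fin 8) - r • LinearMap.proj 0
def bH (s : ℂ) : (Fin 8 → ℂ) →ₗ[ℂ] ℂ := LinearMap.proj (6 : Fin 8) - s • LinearMap.proj 2
lemma bF_apply (r : ℂ) (v : Fin 8 → ℂ) : bF r v = v 4 - r * v 0 := rfl
lemma bH_apply (s : ℂ) (v : Fin 8 → ℂ) : bH s v = v 6 - s * v 2 := rfl
lemma sw (a b : Fin 8 → ℂ) : ι ℂ b * ι ℂ a = -(ι ℂ a * ι ℂ b) :=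
  eq_neg_of_add_eq_zero_right (ι_add_mul_swap a b)
lemma he0 : eta 0 = ι ℂ (Pi.single (0 : Fin 8) 1) := rfl
lemma he1 : eta 1 = ι ℂ (Pi.single (1 : Fin 8) 1) := rfl
lemma he2 : eta 2 = ι ℂ (Pi.single (2 : Fin 8) 1) := rfl
lemma he3 : eta 3 = ι ℂ (Pi.single (3 : Fin 8) 1) := rfl
lemma hb0 : etb 0 = ι ℂ (Pi.single (4 : Fin 8) 1) := rfl
lemma hb1 : etb 1 = ι ℂ (Pi.single (5 : Fin 8) 1) := rfl
lemma hb2 : etb 2 = ι ℂ (Pi.single (6 : Fin 8) 1) := rfl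
lemma hb3 : etb 3 = ι ℂ (Pi.single (7 : Fin 8) 1) := rfl

lemma key_lemma {A : Type*} [Ring A] [Algebra ℂ A]
    (x0 x2 y0 y2 : A)
    (hx0 : x0 * x0 = 0) (hx2 : x2 * x2 = 0) (hy0 : y0 * y0 = 0) (hy2 : y2 * y2 = 0)
    (s1 : x2 * x0 = -(x0 * x2)) (s2 : y0 * x0 = -(x0 * y0)) (s3 : y0 * x2 = -(x2 * y0))
    (s4 : y2 * y0 = -(y0 * y2)) (s5 : y2 * x0 = -(x0 * y2)) (s6 : y2 * x2 = -(x2 * y2))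
    (a2 a3 a5 a10 a12 r s rc sc : ℂ)
    (h : -r * a5 + s * a10 + r * s * a2 = 0) :
    ((1 - r * rc) * (1 - s * sc)) • (a2 • (x0 * x2) + a3 • (x0 * y0) + a5 • (x0 * y2)
      + a10 • (x2 * y0) + a12 • (x2 * y2)) =
      (a2 - sc * a5 + rc * a10) • ((x0 + r • y0) * (x2 + s • y2))
    + (a3 * (1 - s * sc)) • ((x0 + r • y0) * (y0 + rc • x0))
    + (a5 - s * a2 - s * rc * a10) • ((x0 + r • y0) * (y2 + sc • x2))
    + (a10 + r * a2 - r * sc * a5) • ((x2 + s • y2) * (y0 + rc • x0))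
    + (a12 * (1 - r * rc)) • ((x2 + s • y2) * (y2 + sc • x2)) := by
  simp only [mul_add, add_mul, smul_mul_assoc, mul_smul_comm, smul_add, smul_smul,
    hx0, hx2, hy0, hy2, s1, s2, s3, s4, s5, s6, smul_zero, add_zero, zero_add, smul_neg]
  match_scalars
  any_goals ring
  all_goals try linear_combination (rc*sc)*h
  all_goals try linear_combination h
  all_goals try linear_combination rc*h
  all_goals try linear_combination (-sc)*h

set_option maxHeartbeats 1000000 in
theorem statement8 (a2 a3 a5 a10 a12 : ℂ) (r s : ℂ)
    (hr : ‖r‖ < 1) (hs : ‖s‖ < 1)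
    (d : Λ8 →ₗ[ℂ] Λ8)
    (hdL : ∀ (v : Fin 8 → ℂ) (y : Λ8),
      d (ExteriorAlgebra.ι ℂ v * y) = d (ExteriorAlgebra.ι ℂ v) * y
        - ExteriorAlgebra.ι ℂ v * d y)
    (hd1 : d 1 = 0)
    (hclosed : ∀ j : Fin 4, j ≠ 3 → d (eta j) = 0 ∧ d (etb j) = 0)
    (hd4 : d (eta 3) = a2 • (eta 0 * eta 2) + a3 • (eta 0 * etb 0)
      + a5 • (eta 0 * etb 2) + a10 • (eta 2 * etb 0) + a12 • (eta 2 * etb 2))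
    (hdb4 : d (etb 3) = (starRingEnd ℂ a2) • (etb 0 * etb 2)
      + (starRingEnd ℂ a3) • (etb 0 * eta 0) + (starRingEnd ℂ a5) • (etb 0 * eta 2)
      + (starRingEnd ℂ a10) • (etb 2 * eta 0) + (starRingEnd ℂ a12) • (etb 2 * eta 2)) :
    -- (dη^j_{r,s})^{0,2} = 0 for all j iff −ra₅ + sa₁₀ + rsa₂ = 0
    (∀ j : Fin 4, d (etaRS r s j) ∈ Submodule.span ℂ
        (((Set.range fun p : Fin 4 × Fin 4 => etaRS r s p.1 * etaRS r s p.2) ∪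
          (Set.range fun p : Fin 4 × Fin 4 => etaRS r s p.1 * etbRS r s p.2)) : Set Λ8))
      ↔ -r * a5 + s * a10 + r * s * a2 = 0 := by
  set S := Submodule.span ℂ
        (((Set.range fun p : Fin 4 × Fin 4 => etaRS r s p.1 * etaRS r s p.2) ∪
          (Set.range fun p : Fin 4 × Fin 4 => etaRS r s p.1 * etbRS r s p.2)) : Set Λ8) with hS
  have h30 : etaRS r s 3 = eta 3 := rfl
  constructor
  · -- forward
    intro H
    have H3 := H 3
    rw [h30, hd4] at H3
    -- the functional kills S
    have hvec : ∀ p : Fin 4, ∃ v, etaRS r s p = ι ℂ v ∧ bF r v = 0 ∧ bH s v = 0 := by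
      intro p
      fin_cases p
      · refine ⟨((Pi.single 0 1 : Fin 8 → ℂ) + r • (Pi.single 4 1 : Fin 8 → ℂ)), ?_, ?_, ?_⟩
        · simp [etaRS, he0, hb0, map_add, map_smul]
        · simp [bF_apply, Pi.single_apply]
        · simp [bH_apply, Pi.single_apply]
      · exact ⟨((Pi.single 1 1 : Fin 8 → ℂ)), by simp [etaRS, he1],
          by simp [bF_apply, Pi.single_apply], by simp [bH_apply, Pi.single_apply]⟩
      · refine ⟨((Pi.single 2 1 : Fin 8 → ℂ) + s • (Pi.single 6 1 : Fin 8 → ℂ)), ?_, ?_, ?_⟩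
        · simp [etaRS, he2, hb2, map_add, map_smul]
        · simp [bF_apply, Pi.single_apply]
        · simp [bH_apply, Pi.single_apply]
      · exact ⟨((Pi.single 3 1 : Fin 8 → ℂ)), by simp [etaRS, he3],
          by simp [bF_apply, Pi.single_apply], by simp [bH_apply, Pi.single_apply]⟩
    have hvecB : ∀ q : Fin 4, ∃ w, etbRS r s q = ι ℂ w := by
      intro q
      fin_cases q
      · exact ⟨((Pi.single 4 1 : Fin 8 → ℂ) + (starRingEnd ℂ r) • (Pi.single 0 1 : Fin 8 → ℂ)),
          by simp [etbRS, he0, hb0, map_add, map_smul]⟩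
      · exact ⟨((Pi.single 5 1 : Fin 8 → ℂ)), by simp [etbRS, hb1]⟩
      · exact ⟨((Pi.single 6 1 : Fin 8 → ℂ) + (starRingEnd ℂ s) • (Pi.single 2 1 : Fin 8 → ℂ)),
          by simp [etbRS, he2, hb2, map_add, map_smul]⟩
      · exact ⟨((Pi.single 7 1 : Fin 8 → ℂ)), by simp [etbRS, hb3]⟩
    have hker : S ≤ LinearMap.ker (ell (bF r) (bH s)) := by
      rw [hS, Submodule.span_le]
      rintro x (⟨⟨p, q⟩, rfl⟩ | ⟨⟨p, q⟩, rfl⟩)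
      · obtain ⟨v, hv, hv1, hv2⟩ := hvec p
        obtain ⟨w, hw, hw1, hw2⟩ := hvec q
        simp [LinearMap.mem_ker, hv, hw, ell_ι_mul_ι, hv1, hv2, hw1, hw2]
      · obtain ⟨v, hv, hv1, hv2⟩ := hvec p
        obtain ⟨w, hw⟩ := hvecB q
        simp [LinearMap.mem_ker, hv, hw, ell_ι_mul_ι, hv1, hv2]
    have hz : ell (bF r) (bH s) (a2 • (eta 0 * eta 2) + a3 • (eta 0 * etb 0)
      + a5 • (eta 0 * etb 2) + a10 • (eta 2 * etb 0) + a12 • (eta 2 * etb 2)) = 0 :=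
      hker H3
    rw [he0, he2, hb0, hb2] at hz
    simp only [map_add, map_smul, ell_ι_mul_ι, bF_apply, bH_apply, Pi.single_apply] at hz
    simp (config := { decide := true }) at hz
    linear_combination hz
  · -- backward
    intro h j
    have memA : ∀ p q : Fin 4, etaRS r s p * etaRS r s q ∈ S := fun p q =>
      Submodule.subset_span (Set.mem_union_left _ ⟨(p, q), rfl⟩)
    have memB : ∀ p q : Fin 4, etaRS r s p * etbRS r s q ∈ S := fun p q =>
      Submodule.subset_span (Set.mem_union_right _ ⟨(p, q), rfl⟩)
    fin_cases j
    · show d (etaRS r s 0) ∈ S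
      have : etaRS r s 0 = eta 0 + r • etb 0 := rfl
      rw [this, map_add, map_smul, (hclosed 0 (by decide)).1, (hclosed 0 (by decide)).2]
      simp
    · show d (etaRS r s 1) ∈ S
      have : etaRS r s 1 = eta 1 := rfl
      rw [this, (hclosed 1 (by decide)).1]
      simp
    · show d (etaRS r s 2) ∈ S
      have : etaRS r s 2 = eta 2 + s • etb 2 := rfl
      rw [this, map_add, map_smul, (hclosed 2 (by decide)).1, (hclosed 2 (by decide)).2]
      simp
    · show d (etaRS r s 3) ∈ S
      rw [show etaRS r s (3 : Fin 4) = eta 3 from rfl]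
      set rc := (starRingEnd ℂ) r with hrc
      set sc := (starRingEnd ℂ) s with hsc
      have hD1 : (1 : ℂ) - r * rc ≠ 0 := by
        rw [hrc, Complex.mul_conj]
        intro hcon
        have h1 : (Complex.normSq r : ℂ) = 1 := by linear_combination -hcon
        have h2 : Complex.normSq r = 1 := by exact_mod_cast h1
        have h3 := Complex.sq_norm r
        nlinarith [norm_nonneg r]
      have hD2 : (1 : ℂ) - s * sc ≠ 0 := by
        rw [hsc, Complex.mul_conj]
        intro hcon
        have h1 : (Complex.normSq s : ℂ) = 1 := by linear_combination -hcon
        have h2 : Complex.normSq s = 1 := by exact_mod_cast h1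
        have h3 := Complex.sq_norm s
        nlinarith [norm_nonneg s]
      have key : ((1 - r * rc) * (1 - s * sc)) • d (eta 3) =
          (a2 - sc * a5 + rc * a10) • (etaRS r s 0 * etaRS r s 2)
        + (a3 * (1 - s * sc)) • (etaRS r s 0 * etbRS r s 0)
        + (a5 - s * a2 - s * rc * a10) • (etaRS r s 0 * etbRS r s 2)
        + (a10 + r * a2 - r * sc * a5) • (etaRS r s 2 * etbRS r s 0)
        + (a12 * (1 - r * rc)) • (etaRS r s 2 * etbRS r s 2) := by
        rw [hd4]
        show _ = _ • ((eta 0 + r • etb 0) * (eta 2 + s • etb 2))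
          + _ • ((eta 0 + r • etb 0) * (etb 0 + rc • eta 0))
          + _ • ((eta 0 + r • etb 0) * (etb 2 + sc • eta 2))
          + _ • ((eta 2 + s • etb 2) * (etb 0 + rc • eta 0))
          + _ • ((eta 2 + s • etb 2) * (etb 2 + sc • eta 2))
        exact key_lemma (eta 0) (eta 2) (etb 0) (etb 2)
          (by rw [he0]; exact ι_sq_zero _) (by rw [he2]; exact ι_sq_zero _)
          (by rw [hb0]; exact ι_sq_zero _) (by rw [hb2]; exact ι_sq_zero _)
          (by rw [he0, he2]; exact sw _ _) (by rw [he0, hb0]; exact sw _ _)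
          (by rw [he2, hb0]; exact sw _ _) (by rw [hb0, hb2]; exact sw _ _)
          (by rw [he0, hb2]; exact sw _ _) (by rw [he2, hb2]; exact sw _ _)
          a2 a3 a5 a10 a12 r s rc sc h
      have hd3 : d (eta 3) = (((1 - r * rc) * (1 - s * sc))⁻¹)
          • (((1 - r * rc) * (1 - s * sc)) • d (eta 3)) :=
        (inv_smul_smul₀ (mul_ne_zero hD1 hD2) _).symm
      rw [hd3, key]
      refine Submodule.smul_mem _ _ ?_
      refine Submodule.add_mem _ (Submodule.add_mem _ (Submodule.add_mem _ (Submodule.add_mem _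
        (Submodule.smul_mem _ _ (memA 0 2)) (Submodule.smul_mem _ _ (memB 0 0)))
        (Submodule.smul_mem _ _ (memB 0 2))) (Submodule.smul_mem _ _ (memB 2 0)))
        (Submodule.smul_mem _ _ (memB 2 2))
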